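/- Let K be a convex pentagon formed as the union of a rectangle BCDE with side lengths a and b and an equilateral triangle ABE with side length a and height h, glued along the common side BE. Then for every interior point P of the pentagon, the sum of the distances from P to the lines containing the five sides equals a + b + h. -/

import Mathlib

open Metric

noncomputable section

abbrev E2 := EuclideanSpace ℝ (Fin 2)

def pt (x y : ℝ) : E2 := WithLp.toLp 2 ![x, y]

lemma pt_sub (a b c d : ℝ) : pt a b - pt c d = pt (a-c) (b-d) := by
  ext i; fin_cases i <;> simp [pt]

lemma pt_add (a b c d : ℝ) : pt a b + pt c d = pt (a+c) (b+d) := by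
  ext i; fin_cases i <;> simp [pt]

lemma pt_smul (r a b : ℝ) : r • pt a b = pt (r*a) (r*b) := by
  ext i; fin_cases i <;> simp [pt]

lemma pt_inner (a b c d : ℝ) : (inner ℝ (pt a b) (pt c d) : ℝ) = a*c + b*d := by
  simp [pt, PiLp.inner_apply, Fin.sum_univ_two]; ring

lemma pt_norm (a b : ℝ) : ‖pt a b‖ = Real.sqrt (a^2 + b^2) := by
  simp [pt, EuclideanSpace.norm_eq, Fin.sum_univ_two, sq_abs]

lemma pt_eta (P : E2) : P = pt (P 0) (P 1) := by
  ext i; fin_cases i <;> simp [pt]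

lemma pt_congr {u v u' v' : ℝ} (h1 : u = u') (h2 : v = v') : pt u v = pt u' v' := by
  rw [h1, h2]

lemma infDist_line_eq (p q P n : E2) (c s t : ℝ) (hc : 0 < c)
    (hnorm : ‖n‖ = c)
    (horth : (inner ℝ n (q - p) : ℝ) = 0)
    (hdecomp : P - p = s • n + t • (q - p)) :
    infDist P (affineSpan ℝ ({p, q} : Set E2)) = |s| * c := by
  apply le_antisymm
  · have hmem : t • (q - p) + p ∈ affineSpan ℝ ({p, q} : Set E2) := by
      simpa [vsub_eq_sub, vadd_eq_add] using smul_vsub_vadd_mem_affineSpan_pair t p q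
    calc infDist P (affineSpan ℝ ({p, q} : Set E2)) ≤ dist P (t • (q - p) + p) :=
          infDist_le_dist_of_mem hmem
      _ = ‖P - (t • (q - p) + p)‖ := by rw [dist_eq_norm]
      _ = ‖s • n‖ := by
          congr 1
          have : P - (t • (q - p) + p) = (P - p) - t • (q - p) := by abel
          rw [this, hdecomp]; abel
      _ = |s| * c := by rw [norm_smul, hnorm, Real.norm_eq_abs]
  · by_contra hcon
    push_neg at hcon
    rw [infDist_lt_iff ⟨p, subset_affineSpan ℝ _ (by simp)⟩] at hcon
    obtain ⟨z, hz, hdz⟩ := hcon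
    have hz' : (z - p) +ᵥ p ∈ affineSpan ℝ ({p, q} : Set E2) := by
      simpa [vadd_eq_add] using hz
    obtain ⟨r, hr⟩ := vadd_left_mem_affineSpan_pair.mp hz'
    rw [vsub_eq_sub] at hr
    have hPz : P - z = s • n + (t - r) • (q - p) := by
      have : P - z = (P - p) - (z - p) := by abel
      rw [this, hdecomp, ← hr]
      module
    have hinner : (inner ℝ n (P - z) : ℝ) = s * c ^ 2 := by
      rw [hPz, inner_add_right, real_inner_smul_right, real_inner_smul_right, horth,
        real_inner_self_eq_norm_sq, hnorm]
      ring
    have hcs := abs_real_inner_le_norm n (P - z)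
    rw [hinner, hnorm] at hcs
    have : |s| * c ^ 2 ≤ c * ‖P - z‖ := by
      calc |s| * c ^ 2 = |s * c ^ 2| := by
            rw [abs_mul, abs_of_nonneg (by positivity : (0:ℝ) ≤ c^2)]
        _ ≤ c * ‖P - z‖ := hcs
    rw [dist_eq_norm] at hdz
    nlinarith [norm_nonneg (P - z)]

set_option maxHeartbeats 1000000 in
/-- Viviani-type theorem for the pentagon which is the union of the rectangle `BCDE`
with side lengths `a`, `b` and the equilateral triangle `ABE` with side length `a` and
height `h = (√3/2)a`, glued along `BE`: with `B=(-a/2, b)`, `C=(-a/2, 0)`,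
`D=(a/2, 0)`, `E=(a/2, b)`, `A=(0, b+h)`, the sum of the distances from any interior
point `P` to the lines containing the five sides equals `a + b + h`. -/
theorem pentagon_viviani (a b : ℝ) (ha : 0 < a) (hb : 0 < b)
    (P : E2)
    (hP : P ∈ interior (convexHull ℝ
      ({pt 0 (b + Real.sqrt 3 / 2 * a), pt (-(a / 2)) b, pt (-(a / 2)) 0,
        pt (a / 2) 0, pt (a / 2) b} : Set E2))) :
    infDist P (affineSpan ℝ {pt 0 (b + Real.sqrt 3 / 2 * a), pt (-(a / 2)) b} : Set E2)
      + infDist P (affineSpan ℝ {pt (-(a / 2)) b, pt (-(a / 2)) 0} : Set E2)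
      + infDist P (affineSpan ℝ {pt (-(a / 2)) 0, pt (a / 2) 0} : Set E2)
      + infDist P (affineSpan ℝ {pt (a / 2) 0, pt (a / 2) b} : Set E2)
      + infDist P (affineSpan ℝ {pt (a / 2) b, pt 0 (b + Real.sqrt 3 / 2 * a)} : Set E2)
      = a + b + Real.sqrt 3 / 2 * a := by
  set h : ℝ := Real.sqrt 3 / 2 * a with hh_def
  have hh : 0 < h := by
    have : (0:ℝ) < Real.sqrt 3 := Real.sqrt_pos.mpr (by norm_num)
    positivity
  have h2 : h ^ 2 = 3 / 4 * a ^ 2 := by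
    have h3 : Real.sqrt 3 ^ 2 = 3 := Real.sq_sqrt (by norm_num)
    rw [hh_def]; nlinarith [h3]
  set x : ℝ := P 0 with hx_def
  set y : ℝ := P 1 with hy_def
  have hP0 : P = pt x y := pt_eta P
  have ha2 : (a:ℝ)^2 ≠ 0 := by positivity
  have ha0 : (a:ℝ) ≠ 0 := ne_of_gt ha
  have hb0 : (b:ℝ) ≠ 0 := ne_of_gt hb
  -- linear constraints from convex hull membership
  have hhull := interior_subset hP
  have hineq : ∀ c1 c2 d : ℝ,
      c2 * (b + h) ≤ d → c1 * (-(a/2)) + c2 * b ≤ d → c1 * (-(a/2)) ≤ d →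
      c1 * (a/2) ≤ d → c1 * (a/2) + c2 * b ≤ d → c1 * x + c2 * y ≤ d := by
    intro c1 c2 d h1 h2' h3 h4 h5
    have hlin : IsLinearMap ℝ (fun v : E2 => c1 * v 0 + c2 * v 1) :=
      ⟨fun u v => by simp only [PiLp.add_apply]; ring,
       fun r v => by simp only [PiLp.smul_apply, smul_eq_mul]; ring⟩
    have hconv : Convex ℝ {v : E2 | c1 * v 0 + c2 * v 1 ≤ d} :=
      convex_halfSpace_le hlin d
    have hsub : ({pt 0 (b + Real.sqrt 3 / 2 * a), pt (-(a / 2)) b, pt (-(a / 2)) 0,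
        pt (a / 2) 0, pt (a / 2) b} : Set E2) ⊆ {v : E2 | c1 * v 0 + c2 * v 1 ≤ d} := by
      rintro v (rfl | rfl | rfl | rfl | rfl) <;>
        simp only [Set.mem_setOf_eq, pt, PiLp.toLp_apply, Matrix.cons_val_zero, Matrix.cons_val_one,
          Matrix.head_cons, ← hh_def] <;> linarith
    have := convexHull_min hsub hconv hhull
    simpa using this
  have hx1 : -(a/2) ≤ x := by
    have := hineq (-1) 0 (a/2) (by linarith) (by linarith) (by linarith)
      (by linarith) (by linarith)
    linarith
  have hx2 : x ≤ a/2 := by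
    have := hineq 1 0 (a/2) (by linarith) (by linarith) (by linarith)
      (by linarith) (by linarith)
    linarith
  have hy1 : 0 ≤ y := by
    have := hineq 0 (-1) 0 (by nlinarith) (by linarith) (by linarith)
      (by linarith) (by linarith)
    linarith
  have hAB : -h * x + (a/2) * y ≤ (a*h + a*b)/2 := by
    have := hineq (-h) (a/2) ((a*h + a*b)/2) (by nlinarith) (by nlinarith)
      (by nlinarith) (by nlinarith) (by nlinarith)
    linarith
  have hEA : h * x + (a/2) * y ≤ (a*h + a*b)/2 := by
    have := hineq h (a/2) ((a*h + a*b)/2) (by nlinarith) (by nlinarith)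
      (by nlinarith) (by nlinarith) (by nlinarith)
    linarith
  -- the five distances
  have dAB : infDist P (affineSpan ℝ {pt 0 (b + Real.sqrt 3 / 2 * a), pt (-(a / 2)) b} : Set E2)
      = (h * x - (a/2) * y + (a*h + a*b)/2) / a := by
    have key := infDist_line_eq (pt 0 (b + h)) (pt (-(a/2)) b) P (pt (-h) (a/2)) a
      ((-h * x + (a/2) * (y - (b + h))) / a^2)
      ((-(a/2) * x - h * (y - (b + h))) / a^2) ha
      (by rw [pt_norm, show (-h)^2 + (a/2)^2 = a^2 by nlinarith]
          exact Real.sqrt_sq ha.le)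
      (by rw [pt_sub, pt_inner]; ring)
      (by rw [hP0, pt_sub, pt_sub, pt_smul, pt_smul, pt_add]
          refine pt_congr ?_ ?_
          · field_simp
            linear_combination (-8*a^2*x) * h2 + (2*x*a^4 - x*a^2) * (Real.sq_sqrt (show (0:ℝ) ≤ 3 by norm_num))
          · field_simp
            linear_combination (-8*a^2*(y-b-h)) * h2 + (-y*a^2 + 2*y*a^4 + b*a^2 - 2*b*a^4 + Real.sqrt 3*(a^3/2 - a^5)) * (Real.sq_sqrt (show (0:ℝ) ≤ 3 by norm_num)))
    rw [← hh_def, key, abs_of_nonpos (div_nonpos_iff.mpr (Or.inr ⟨by nlinarith, by positivity⟩))]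
    field_simp
    ring
  have dBC : infDist P (affineSpan ℝ {pt (-(a / 2)) b, pt (-(a / 2)) 0} : Set E2)
      = x + a/2 := by
    have key := infDist_line_eq (pt (-(a/2)) b) (pt (-(a/2)) 0) P (pt 1 0) 1
      (x + a/2) ((b - y) / b) one_pos
      (by rw [pt_norm]; norm_num)
      (by rw [pt_sub, pt_inner]; ring)
      (by rw [hP0, pt_sub, pt_sub, pt_smul, pt_smul, pt_add]
          exact pt_congr (by ring) (by field_simp; ring))
    rw [key, abs_of_nonneg (by linarith)]
    ring
  have dCD : infDist P (affineSpan ℝ {pt (-(a / 2)) 0, pt (a / 2) 0} : Set E2) = y := by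
    have key := infDist_line_eq (pt (-(a/2)) 0) (pt (a/2) 0) P (pt 0 1) 1
      y ((x + a/2) / a) one_pos
      (by rw [pt_norm]; norm_num)
      (by rw [pt_sub, pt_inner]; ring)
      (by rw [hP0, pt_sub, pt_sub, pt_smul, pt_smul, pt_add]
          refine pt_congr ?_ (by ring)
          field_simp
          ring)
    rw [key, abs_of_nonneg hy1]
    ring
  have dDE : infDist P (affineSpan ℝ {pt (a / 2) 0, pt (a / 2) b} : Set E2)
      = a/2 - x := by
    have key := infDist_line_eq (pt (a/2) 0) (pt (a/2) b) P (pt 1 0) 1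
      (x - a/2) (y / b) one_pos
      (by rw [pt_norm]; norm_num)
      (by rw [pt_sub, pt_inner]; ring)
      (by rw [hP0, pt_sub, pt_sub, pt_smul, pt_smul, pt_add]
          exact pt_congr (by ring) (by field_simp; ring))
    rw [key, abs_of_nonpos (by linarith)]
    ring
  have dEA : infDist P (affineSpan ℝ {pt (a / 2) b, pt 0 (b + Real.sqrt 3 / 2 * a)} : Set E2)
      = (-h * x - (a/2) * y + (a*h + a*b)/2) / a := by
    have key := infDist_line_eq (pt (a/2) b) (pt 0 (b + h)) P (pt h (a/2)) a
      ((h * (x - a/2) + (a/2) * (y - b)) / a^2)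
      ((-(a/2) * (x - a/2) + h * (y - b)) / a^2) ha
      (by rw [pt_norm, show h^2 + (a/2)^2 = a^2 by nlinarith]
          exact Real.sqrt_sq ha.le)
      (by rw [pt_sub, pt_inner]; ring)
      (by rw [hP0, pt_sub, pt_sub, pt_smul, pt_smul, pt_add]
          refine pt_congr ?_ ?_
          · field_simp
            linear_combination (-32*a^2*(x-a/2)) * h2 + (-2*a^2*x + a^3 + 8*a^4*x - 4*a^5) * (Real.sq_sqrt (show (0:ℝ) ≤ 3 by norm_num))
          · field_simp
            linear_combination (-16*a^2*(y-b)) * h2 + (-y*a^2 + 4*y*a^4 + b*a^2 - 4*b*a^4) * (Real.sq_sqrt (show (0:ℝ) ≤ 3 by norm_num)))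
    rw [← hh_def, key, abs_of_nonpos (div_nonpos_iff.mpr (Or.inr ⟨by nlinarith, by positivity⟩))]
    field_simp
    ring
  rw [dAB, dBC, dCD, dDE, dEA]
  field_simp
  ring
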